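/- For s > 1, the series ∑_{p prime, p ≥ 16} 1/(p·(log log p)^s) converges. -/

import Mathlib

open Real Finset

/-- Positivity of the iterated-log type expression. -/
lemma aux_log_pos {x : ℝ} (hx : 4 ≤ x) : 0 < Real.log (x * Real.log 2) := by
  apply Real.log_pos
  nlinarith [Real.log_two_gt_d9]

/-- the count of primes in `[2^j, 2^(j+1))` is at most `2^(j+2)/j`. -/
lemma count_aux (j : ℕ) (v : Finset ℕ) (hp : ∀ p ∈ v, Nat.Prime p)
    (hlb : ∀ p ∈ v, 2 ^ j ≤ p) (hub : ∀ p ∈ v, p < 2 ^ (j + 1)) :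
    j * v.card ≤ 2 ^ (j + 2) := by
  have h1 : (2 ^ j) ^ v.card ≤ ∏ p ∈ v, p := Finset.pow_card_le_prod v _ _ hlb
  have h2 : ∏ p ∈ v, p ≤ primorial (2 ^ (j + 1) - 1) := by
    rw [primorial, Nat.sub_add_cancel Nat.one_le_two_pow]
    apply Finset.prod_le_prod_of_subset_of_one_le'
    · intro p hpv
      simp only [Finset.mem_filter, Finset.mem_range]
      exact ⟨hub p hpv, hp p hpv⟩
    · intro i hi _
      exact (Finset.mem_filter.mp hi).2.one_lt.le
  have h3 : primorial (2 ^ (j + 1) - 1) ≤ 4 ^ (2 ^ (j + 1) - 1) :=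
    primorial_le_4_pow _
  have h4 : (4:ℕ) ^ (2 ^ (j + 1) - 1) ≤ 2 ^ (2 ^ (j + 2)) := by
    have : (4:ℕ) = 2 ^ 2 := by norm_num
    rw [this, ← pow_mul]
    apply Nat.pow_le_pow_right (by norm_num)
    have : 2 ^ (j + 1) - 1 ≤ 2 ^ (j + 1) := Nat.sub_le _ _
    calc 2 * (2 ^ (j + 1) - 1) ≤ 2 * 2 ^ (j + 1) := by omega
      _ = 2 ^ (j + 2) := by ring
  have : (2:ℕ) ^ (j * v.card) ≤ 2 ^ (2 ^ (j + 2)) := by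
    calc (2:ℕ) ^ (j * v.card) = (2 ^ j) ^ v.card := by rw [pow_mul]
      _ ≤ ∏ p ∈ v, p := h1
      _ ≤ primorial (2 ^ (j + 1) - 1) := h2
      _ ≤ 4 ^ (2 ^ (j + 1) - 1) := h3
      _ ≤ 2 ^ (2 ^ (j + 2)) := h4
  exact (Nat.pow_le_pow_iff_right (by norm_num)).mp this

/-- The comparison series is summable (Bertrand series via condensation). -/
lemma aux_summable (s : ℝ) (hs : 1 < s) :
    Summable (fun k : ℕ => 1 / (((k:ℝ) + 4) * Real.log (((k:ℝ) + 4) * Real.log 2) ^ s)) := by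
  set f : ℕ → ℝ := fun n => 1 / (((n:ℝ) + 4) * Real.log (((n:ℝ) + 4) * Real.log 2) ^ s) with hf
  have hs0 : (0:ℝ) ≤ s := le_of_lt (lt_trans one_pos hs)
  have hx4 : ∀ n : ℕ, (4:ℝ) ≤ (n:ℝ) + 4 := fun n => le_add_of_nonneg_left (Nat.cast_nonneg n)
  have hLpos : ∀ n : ℕ, 0 < Real.log (((n:ℝ) + 4) * Real.log 2) := fun n => aux_log_pos (hx4 n)
  have hden : ∀ n : ℕ, 0 < ((n:ℝ) + 4) * Real.log (((n:ℝ) + 4) * Real.log 2) ^ s := by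
    intro n
    have := hLpos n
    positivity
  have hfpos : ∀ n, 0 ≤ f n := fun n => le_of_lt (by simpa [hf] using one_div_pos.mpr (hden n))
  have hanti : ∀ ⦃m n : ℕ⦄, 0 < m → m ≤ n → f n ≤ f m := by
    intro m n _ hmn
    apply one_div_le_one_div_of_le (hden m)
    have hmn' : ((m:ℝ) + 4) ≤ (n:ℝ) + 4 := by exact_mod_cast by omega
    have hlog : Real.log (((m:ℝ) + 4) * Real.log 2) ≤ Real.log (((n:ℝ) + 4) * Real.log 2) := by
      apply Real.log_le_log (by nlinarith [Real.log_two_gt_d9])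
      nlinarith [Real.log_two_gt_d9]
    exact mul_le_mul hmn' (Real.rpow_le_rpow (hLpos m).le hlog hs0) (Real.rpow_pos_of_pos (hLpos m) s).le (by positivity)
  rw [← summable_condensed_iff_of_nonneg hfpos hanti]
  rw [← summable_nat_add_iff 2]
  have hbound : ∀ k : ℕ, (2:ℝ) ^ (k + 2) * f (2 ^ (k + 2)) ≤ 3 ^ s * (1 / ((k:ℝ) + 2) ^ s) := by
    intro k
    have h2k : (2:ℝ) ^ (k + 2) = ((2 ^ (k + 2) : ℕ):ℝ) := by push_cast; ring
    set N : ℕ := 2 ^ (k + 2) with hN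
    have hNlb : ((k:ℝ) + 2) ≤ (N:ℝ) := by
      have : k + 2 + 1 ≤ 2 ^ (k + 2) := Nat.succ_le_of_lt (Nat.lt_two_pow_self)
      exact_mod_cast by omega
    have hLge : ((k:ℝ) + 2) / 3 ≤ Real.log (((N:ℝ) + 4) * Real.log 2) := by
      have h1 : Real.log ((N:ℝ) * Real.log 2) ≤ Real.log (((N:ℝ) + 4) * Real.log 2) := by
        apply Real.log_le_log
        · have hN1 : (1:ℝ) ≤ (N:ℝ) := by exact_mod_cast Nat.one_le_two_pow
          nlinarith [Real.log_two_gt_d9]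
        · have : (0:ℝ) < Real.log 2 := Real.log_pos (by norm_num)
          nlinarith
      have h2 : Real.log ((N:ℝ) * Real.log 2) = (k + 2 : ℕ) * Real.log 2 + Real.log (Real.log 2) := by
        rw [Real.log_mul (by positivity) (ne_of_gt (Real.log_pos (by norm_num)))]
        rw [hN]
        push_cast
        rw [Real.log_pow]
        push_cast
        ring
      have hll : -0.6932 < Real.log (Real.log 2) := by
        have h2lt : Real.log 2 < 0.6931471808 := Real.log_two_lt_d9
        have h2gt : (0.6931471803:ℝ) < Real.log 2 := Real.log_two_gt_d9
        have : Real.log (1/2) ≤ Real.log (Real.log 2) := by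
          apply Real.log_le_log (by norm_num)
          linarith
        rw [Real.log_div (by norm_num) (by norm_num), Real.log_one] at this
        linarith
      have h3 : ((k:ℝ) + 2) / 3 ≤ Real.log ((N:ℝ) * Real.log 2) := by
        rw [h2]
        push_cast
        nlinarith [Real.log_two_gt_d9, hll, Nat.cast_nonneg (α := ℝ) k]
      linarith
    have hLpos' : (0:ℝ) < Real.log (((N:ℝ) + 4) * Real.log 2) := by
      exact aux_log_pos (le_add_of_nonneg_left (Nat.cast_nonneg N))
    have hkpos : (0:ℝ) < ((k:ℝ) + 2) / 3 := by positivity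
    have hrpow : (((k:ℝ) + 2) / 3) ^ s ≤ Real.log (((N:ℝ) + 4) * Real.log 2) ^ s :=
      Real.rpow_le_rpow hkpos.le hLge hs0
    have hfN : f N ≤ 1 / ((N:ℝ) * (((k:ℝ) + 2) / 3) ^ s) := by
      apply one_div_le_one_div_of_le
      · have : (0:ℝ) < (((k:ℝ) + 2) / 3) ^ s := Real.rpow_pos_of_pos hkpos s
        have hNpos : (0:ℝ) < (N:ℝ) := by positivity
        positivity
      · apply mul_le_mul (by linarith) hrpow (Real.rpow_pos_of_pos hkpos s).le (by positivity)
    calc (2:ℝ) ^ (k + 2) * f N ≤ (N:ℝ) * (1 / ((N:ℝ) * (((k:ℝ) + 2) / 3) ^ s)) := by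
          rw [h2k]
          exact mul_le_mul_of_nonneg_left hfN (by positivity)
      _ = 1 / ((((k:ℝ) + 2) / 3) ^ s) := by
          have hNpos : (0:ℝ) < (N:ℝ) := by positivity
          field_simp
      _ = 3 ^ s * (1 / ((k:ℝ) + 2) ^ s) := by
          rw [Real.div_rpow (by positivity) (by norm_num)]
          rw [one_div_div]
          ring
  apply Summable.of_nonneg_of_le _ hbound
  · have h1 : Summable (fun n : ℕ => 1 / ((n:ℝ)) ^ s) := Real.summable_one_div_nat_rpow.mpr hs
    have h2 : Summable (fun n : ℕ => 1 / (((n:ℝ)) + 2) ^ s) := by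
      have := (summable_nat_add_iff (f := fun n : ℕ => 1 / ((n:ℝ)) ^ s) 2).mpr h1
      simpa [Nat.cast_add] using this
    exact h2.mul_left _
  · intro k
    have := hfpos (2 ^ (k + 2))
    positivity

theorem stmt15 (s : ℝ) (hs : 1 < s) :
    Summable (fun p : {p : ℕ // p.Prime ∧ 16 ≤ p} =>
      1 / ((p : ℝ) * Real.log (Real.log p) ^ s)) := by
  have hs0 : (0:ℝ) ≤ s := le_of_lt (lt_trans one_pos hs)
  set F : {p : ℕ // p.Prime ∧ 16 ≤ p} → ℝ :=
    fun p => 1 / ((p : ℝ) * Real.log (Real.log p) ^ s) with hF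
  -- basic facts about each prime
  have hfacts : ∀ p : {p : ℕ // p.Prime ∧ 16 ≤ p},
      0 < Real.log (Real.log (p:ℕ)) := by
    intro p
    have h16 : (16:ℝ) ≤ ((p:ℕ):ℝ) := by exact_mod_cast p.2.2
    apply Real.log_pos
    have : Real.log 16 ≤ Real.log ((p:ℕ):ℝ) := Real.log_le_log (by norm_num) h16
    have h16' : (2.77:ℝ) < Real.log 16 := by
      have : (16:ℝ) = 2 ^ (4:ℕ) := by norm_num
      rw [this, Real.log_pow]
      push_cast
      nlinarith [Real.log_two_gt_d9]
    linarith
  have hFpos : ∀ p, 0 ≤ F p := by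
    intro p
    have h1 := hfacts p
    have h2 : (0:ℝ) < ((p:ℕ):ℝ) := by
      have := p.2.2; positivity
    have : (0:ℝ) < Real.log (Real.log ((p:ℕ):ℝ)) ^ s := Real.rpow_pos_of_pos h1 s
    positivity
  -- the comparison series
  classical
  set G : ℕ → ℝ := fun k => 4 * (1 / (((k:ℝ) + 4) * Real.log (((k:ℝ) + 4) * Real.log 2) ^ s))
    with hG
  have hGsum : Summable G := (aux_summable s hs).mul_left 4
  have hGpos : ∀ k, 0 ≤ G k := by
    intro k
    have h1 : (0:ℝ) < Real.log (((k:ℝ) + 4) * Real.log 2) := aux_log_pos (le_add_of_nonneg_left (Nat.cast_nonneg k))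
    have h2 : (0:ℝ) < Real.log (((k:ℝ) + 4) * Real.log 2) ^ s := Real.rpow_pos_of_pos h1 s
    have : (0:ℝ) < (k:ℝ) + 4 := by positivity
    rw [hG]
    positivity
  apply summable_of_sum_le (c := ∑' k, G k) (Pi.le_def.mpr hFpos)
  intro u
  set key : {p : ℕ // p.Prime ∧ 16 ≤ p} → ℕ := fun p => Nat.log 2 (p:ℕ) - 4 with hkey
  rw [← Finset.sum_fiberwise_of_maps_to (fun p hp => Finset.mem_image_of_mem key hp) F]
  have fiberbound : ∀ k ∈ u.image key,
      ∑ p ∈ u.filter (fun p => key p = k), F p ≤ G k := by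
    intro k _
    set v := u.filter (fun p => key p = k) with hv
    -- every p in v satisfies Nat.log 2 p = k + 4
    have hlog_eq : ∀ p ∈ v, Nat.log 2 (p:ℕ) = k + 4 := by
      intro p hp
      have hkeyp : key p = k := (Finset.mem_filter.mp hp).2
      have h16 : 16 ≤ (p:ℕ) := p.2.2
      have h4le : 4 ≤ Nat.log 2 (p:ℕ) := by
        have : (2:ℕ) ^ 4 ≤ (p:ℕ) := by norm_num; omega
        exact (Nat.le_log_iff_pow_le (by norm_num) (by omega)).mpr this
      simp only [hkey] at hkeyp
      omega
    set L : ℝ := Real.log (((k:ℝ) + 4) * Real.log 2) with hL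
    have hLpos : (0:ℝ) < L := aux_log_pos (le_add_of_nonneg_left (Nat.cast_nonneg k))
    have hLs : (0:ℝ) < L ^ s := Real.rpow_pos_of_pos hLpos s
    set M : ℝ := 1 / ((2:ℝ) ^ (k + 4) * L ^ s) with hM
    have hMpos : (0:ℝ) < M := by rw [hM]; positivity
    -- elementwise bound
    have helem : ∀ p ∈ v, F p ≤ M := by
      intro p hp
      have hle := hlog_eq p hp
      have hlb : (2:ℕ) ^ (k + 4) ≤ (p:ℕ) := by
        have := Nat.pow_log_le_self 2 (x := (p:ℕ)) (by have := p.2.2; omega)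
        rwa [hle] at this
      have hlbR : (2:ℝ) ^ (k + 4) ≤ ((p:ℕ):ℝ) := by exact_mod_cast hlb
      have hppos : (0:ℝ) < ((p:ℕ):ℝ) := by have := p.2.2; positivity
      have hlog1 : ((k:ℝ) + 4) * Real.log 2 ≤ Real.log ((p:ℕ):ℝ) := by
        have := Real.log_le_log (by positivity) hlbR
        rwa [Real.log_pow, Nat.cast_add, Nat.cast_ofNat] at this
      have hlog2 : L ≤ Real.log (Real.log ((p:ℕ):ℝ)) := by
        rw [hL]
        apply Real.log_le_log _ hlog1
        nlinarith [Real.log_two_gt_d9]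
      have hrpow : L ^ s ≤ Real.log (Real.log ((p:ℕ):ℝ)) ^ s :=
        Real.rpow_le_rpow hLpos.le hlog2 hs0
      rw [hF, hM]
      apply one_div_le_one_div_of_le (by positivity)
      exact mul_le_mul hlbR hrpow hLs.le hppos.le
    have hsum1 : ∑ p ∈ v, F p ≤ (v.card : ℝ) * M := by
      have := Finset.sum_le_card_nsmul v F M helem
      rwa [nsmul_eq_mul] at this
    -- count bound
    have hcount : (k + 4) * v.card ≤ 2 ^ (k + 6) := by
      have hcard : (v.image Subtype.val).card = v.card :=
        Finset.card_image_of_injective _ Subtype.val_injective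
      have := count_aux (k + 4) (v.image Subtype.val)
        (by
          intro q hq
          obtain ⟨p, _, rfl⟩ := Finset.mem_image.mp hq
          exact p.2.1)
        (by
          intro q hq
          obtain ⟨p, hp, rfl⟩ := Finset.mem_image.mp hq
          have := Nat.pow_log_le_self 2 (x := (p:ℕ)) (by have := p.2.2; omega)
          rwa [hlog_eq p hp] at this)
        (by
          intro q hq
          obtain ⟨p, hp, rfl⟩ := Finset.mem_image.mp hq
          have := Nat.lt_pow_succ_log_self (b := 2) (by norm_num) (p:ℕ)
          rwa [hlog_eq p hp] at this)
      rw [hcard] at this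
      calc (k + 4) * v.card ≤ 2 ^ (k + 4 + 2) := this
        _ = 2 ^ (k + 6) := by ring_nf
    have hcountR : ((k:ℝ) + 4) * (v.card : ℝ) ≤ 4 * (2:ℝ) ^ (k + 4) := by
      have : (((k + 4) * v.card : ℕ) : ℝ) ≤ ((2 ^ (k + 6) : ℕ) : ℝ) := by exact_mod_cast hcount
      push_cast at this
      calc ((k:ℝ) + 4) * (v.card : ℝ) ≤ (2:ℝ) ^ (k + 6) := this
        _ = 4 * (2:ℝ) ^ (k + 4) := by ring
    have hfinal : (v.card : ℝ) * M ≤ G k := by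
      rw [hM, hG]
      have hk4 : (0:ℝ) < (k:ℝ) + 4 := by positivity
      simp only [mul_one_div, ← hL]
      rw [div_le_div_iff₀ (by positivity) (by positivity)]
      nlinarith [hLs.le, hcountR, (pow_pos (by norm_num : (0:ℝ) < 2) (k + 4)).le]
    exact le_trans hsum1 hfinal
  calc ∑ k ∈ u.image key, ∑ p ∈ u.filter (fun p => key p = k), F p
      ≤ ∑ k ∈ u.image key, G k := Finset.sum_le_sum fiberbound
    _ ≤ ∑' k, G k := hGsum.sum_le_tsum _ (fun k _ => hGpos k)
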